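/- (Proposition 3.3, strangeness of 𝔸¹-curves, coordinate form.) Let f₀, f₁, f₂ ∈ 𝕜[t] be polynomials such that σ(f₀, f₁) − f₂^p is a nonzero constant (so that t ↦ [f₀(t):f₁(t):f₂(t)] defines a morphism 𝔸¹ → ℙ² avoiding Δ_X, i.e. an 𝔸¹-curve in X). Then f₀·f₁′ − f₀′·f₁ = 0 in 𝕜[t]. (The vanishing of this Wronskian says that every tangent line of the image curve passes through the strange point str = [0:0:1], i.e. the image is a strange curve with strange point str.) -/

import Mathlib

open Polynomial Finset

/-- **Proposition 3.3, strangeness of 𝔸¹-curves, coordinate form.**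
Let `p` be a prime, `𝕜` an algebraically closed field of characteristic `p`, and
`σ(A,B) = ∑_{i=1}^{p-1} σ_i A^i B^{p-i}` with `σ_1 = σ_{p-1} = 1`.  If `f₀, f₁, f₂ ∈ 𝕜[t]`
satisfy that `σ(f₀,f₁) − f₂^p` is a nonzero constant (so `t ↦ [f₀:f₁:f₂]` is an
`𝔸¹`-curve avoiding `Δ_X`), then the Wronskian `f₀·f₁′ − f₀′·f₁` vanishes. -/
theorem wronskian_of_A1_curve_vanishes
    (p : ℕ) (hp : p.Prime) (𝕜 : Type*) [Field 𝕜] [IsAlgClosed 𝕜] [CharP 𝕜 p]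
    (s : ℕ → 𝕜) (hs1 : s 1 = 1) (hsp : s (p - 1) = 1)
    (f₀ f₁ f₂ : Polynomial 𝕜) (c : 𝕜) (hc : c ≠ 0)
    (h : (∑ i ∈ Ioo 0 p, C (s i) * f₀ ^ i * f₁ ^ (p - i)) - f₂ ^ p = C c) :
    f₀ * derivative f₁ - derivative f₀ * f₁ = 0 := by
  have hp0 : ((p : ℕ) : 𝕜) = 0 := CharP.cast_eq_zero 𝕜 p
  have hp2 : 2 ≤ p := hp.two_le
  -- Step 1: differentiate the hypothesis
  have hterm : ∀ i ∈ Ioo 0 p, derivative (C (s i) * f₀ ^ i * f₁ ^ (p - i))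
      = C (s i * (i : 𝕜)) * f₀ ^ (i-1) * f₁ ^ (p-1-i)
        * (derivative f₀ * f₁ - f₀ * derivative f₁) := by
    intro i hi
    obtain ⟨hi0, hip⟩ := mem_Ioo.mp hi
    have h1 : f₀ ^ i = f₀ ^ (i-1) * f₀ := by
      conv_lhs => rw [show i = (i-1)+1 by omega]
      rw [pow_succ]
    have h2 : f₁ ^ (p - i) = f₁ ^ (p-1-i) * f₁ := by
      conv_lhs => rw [show p - i = (p-1-i)+1 by omega]
      rw [pow_succ]
    have h3 : ((p - i : ℕ) : 𝕜) = -(i : 𝕜) := by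
      rw [Nat.cast_sub hip.le, hp0]; ring
    rw [derivative_mul, derivative_mul, derivative_C, derivative_pow, derivative_pow,
        h3, show p - i - 1 = p - 1 - i by omega, h1, h2, C_mul, map_neg]
    ring
  have key : (∑ i ∈ Ioo 0 p, C (s i * (i : 𝕜)) * f₀ ^ (i-1) * f₁ ^ (p-1-i))
      * (derivative f₀ * f₁ - f₀ * derivative f₁) = 0 := by
    have hd := congrArg derivative h
    rw [derivative_sub, derivative_sum, derivative_C, derivative_pow,
        Finset.sum_congr rfl hterm, ← Finset.sum_mul, hp0, map_zero] at hd
    simpa using hd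
  rcases mul_eq_zero.mp key with hG0 | hW
  · -- case: the "partial derivative" factor vanishes
    by_cases hf₁ : f₁ = 0
    · simp [hf₁]
    set K := RatFunc 𝕜
    set φ : Polynomial 𝕜 →+* K := algebraMap (Polynomial 𝕜) K with hφdef
    have hφ : Function.Injective φ := IsFractionRing.injective _ _
    have hφC : ∀ a : 𝕜, φ (C a) = algebraMap 𝕜 K a := by
      intro a
      rw [IsScalarTower.algebraMap_apply 𝕜 (Polynomial 𝕜) K a, Polynomial.algebraMap_eq]
    have hv : φ f₁ ≠ 0 := fun h0 => hf₁ (hφ (by simpa using h0))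
    set w : K := φ f₀ / φ f₁ with hw
    have hf₀w : φ f₀ = w * φ f₁ := (div_mul_cancel₀ _ hv).symm
    set g : Polynomial 𝕜 := ∑ i ∈ Ioo 0 p, C (s i * (i : 𝕜)) * X ^ (i-1) with hgdef
    have hφG : φ (∑ i ∈ Ioo 0 p, C (s i * (i : 𝕜)) * f₀ ^ (i-1) * f₁ ^ (p-1-i))
        = aeval w g * φ f₁ ^ (p-2) := by
      rw [map_sum, hgdef, map_sum, Finset.sum_mul]
      refine Finset.sum_congr rfl fun i hi => ?_
      obtain ⟨hi0, hip⟩ := mem_Ioo.mp hi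
      have hexp : (i-1) + (p-1-i) = p-2 := by omega
      simp only [map_mul, map_pow, aeval_C, aeval_X, hφC, hf₀w, mul_pow]
      rw [← hexp, pow_add]
      ring
    have hg0 : aeval w g = 0 := by
      have h0 : aeval w g * φ f₁ ^ (p-2) = 0 := by
        rw [← hφG, hG0, map_zero]
      exact (mul_eq_zero.mp h0).resolve_right (pow_ne_zero _ hv)
    have hgne : g ≠ 0 := by
      intro h0
      have hcoeff : g.coeff (p-2) = -1 := by
        rw [hgdef, finset_sum_coeff, Finset.sum_eq_single (p-1)]
        · rw [coeff_C_mul, coeff_X_pow, if_pos (by omega), hsp]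
          rw [Nat.cast_sub hp.one_le, hp0]
          ring
        · intro i hi hne
          obtain ⟨h1, h2⟩ := mem_Ioo.mp hi
          rw [coeff_C_mul, coeff_X_pow, if_neg (by omega)]
          ring
        · intro hnm
          exact absurd (mem_Ioo.mpr ⟨by omega, by omega⟩) hnm
      rw [h0, coeff_zero] at hcoeff
      exact one_ne_zero (neg_eq_zero.mp hcoeff.symm)
    -- w is a root of g over the algebraically closed field 𝕜, hence lies in 𝕜
    have hmapne : g.map (algebraMap 𝕜 K) ≠ 0 :=
      (Polynomial.map_ne_zero_iff (algebraMap 𝕜 K).injective).mpr hgne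
    have hroot : w ∈ (g.map (algebraMap 𝕜 K)).roots := by
      rw [mem_roots hmapne]
      simpa [IsRoot, eval_map, ← aeval_def] using hg0
    have hsplit : Splits g := IsAlgClosed.splits g
    rw [hsplit.roots_map] at hroot
    obtain ⟨r, _, hr⟩ := Multiset.mem_map.mp hroot
    have hf₀' : f₀ = C r * f₁ := by
      apply hφ
      rw [map_mul, hφC, hf₀w, ← hr]
    rw [hf₀', derivative_mul, derivative_C]
    ring
  · linear_combination -hW
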